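/- arXiv:2212.07077 — 4 statements merged into one kernel-verified Lean document; each statement's English description precedes it below -/
import Mathlib

section
/- Let Z be a G_δ subset of Q₀ = {x ∈ Q : x₀ = 0} in the Hilbert cube Q = [0,1]^ℕ. Then Q \ Z can be written as a countable union of compact connected subsets of Q. -/
open Set

namespace Stmt3Aux

/-- The segment of points going "straight toward the constant 1 function". -/
noncomputable def segFun (y : ℕ → unitInterval) (t : unitInterval) : ℕ → unitInterval :=
  fun i => ⟨(y i : ℝ) + t * (1 - y i), by
    constructor
    · nlinarith [(y i).2.1, (y i).2.2, t.2.1, t.2.2]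
    · nlinarith [(y i).2.1, (y i).2.2, t.2.1, t.2.2]⟩

lemma segFun_cont (y : ℕ → unitInterval) : Continuous (segFun y) := by
  refine continuous_pi fun i => Continuous.subtype_mk ?_ _
  fun_prop

lemma segFun_zero (y : ℕ → unitInterval) : segFun y 0 = y := by
  funext i; apply Subtype.ext; simp [segFun]

lemma segFun_one (y : ℕ → unitInterval) : segFun y 1 = fun _ => 1 := by
  funext i; apply Subtype.ext; simp [segFun]

/-- The segment along the 0-th coordinate. -/
noncomputable def updFun (z : ℕ → unitInterval) (t : unitInterval) : ℕ → unitInterval :=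
  Function.update z 0 t

lemma updFun_cont (z : ℕ → unitInterval) : Continuous (updFun z) := by
  refine continuous_pi fun i => ?_
  by_cases h : i = 0
  · subst h; simpa [updFun, Function.update] using continuous_id'
  · simpa [updFun, Function.update, h] using continuous_const

/-- Key connectedness criterion: everything joined to a base point. -/
lemma preconnected_of_joined {X : Type*} [TopologicalSpace X] (s : Set X) (p : X)
    (h : ∀ z ∈ s, ∃ t, t ⊆ s ∧ IsPreconnected t ∧ z ∈ t ∧ p ∈ t) :
    IsPreconnected s := by
  have hs : s = ⋃₀ {t | t ⊆ s ∧ IsPreconnected t ∧ p ∈ t} := by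
    apply Subset.antisymm
    · intro z hz
      obtain ⟨t, hts, htc, hzt, hpt⟩ := h z hz
      exact ⟨t, ⟨hts, htc, hpt⟩, hzt⟩
    · intro z hz
      obtain ⟨t, ⟨hts, _, _⟩, hzt⟩ := hz
      exact hts hzt
  rw [hs]
  exact isPreconnected_sUnion p _ (fun t ht => ht.2.2) (fun t ht => ht.2.1)

end Stmt3Aux

open Stmt3Aux

/-- Let `Z` be a Gδ subset of `Q₀ = {x ∈ Q : x 0 = 0}` in the Hilbert cube `Q = [0,1]^ℕ`
(i.e. `Z = Q₀ ∩ ⋂ n, U n` with each `U n` open in `Q`). Then `Q \ Z` is a countable union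
of compact connected subsets of `Q`. -/
theorem stmt_3 (Z : Set (ℕ → unitInterval)) (hZ0 : Z ⊆ {x | x 0 = 0})
    (hZ : ∃ U : ℕ → Set (ℕ → unitInterval), (∀ n, IsOpen (U n)) ∧
      Z = {x | x 0 = 0} ∩ ⋂ n, U n) :
    ∃ C : ℕ → Set (ℕ → unitInterval),
      (∀ n, IsCompact (C n) ∧ IsConnected (C n)) ∧ Zᶜ = ⋃ n, C n := by
  obtain ⟨U, hU, hZeq⟩ := hZ
  -- the "shift to the base" map
  set e : (ℕ → unitInterval) → (ℕ → unitInterval) := fun x => Function.update x 0 0 with he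
  have he_cont : Continuous e := by
    refine continuous_pi fun i => ?_
    by_cases h : i = 0
    · subst h; simpa [he, Function.update] using continuous_const
    · simpa [he, Function.update, h] using continuous_apply i
  have he_upd : ∀ z t, e (updFun z t) = e z := by
    intro z t; funext i
    by_cases h : i = 0 <;> simp [he, updFun, Function.update, h]
  have he_of_zero : ∀ x : ℕ → unitInterval, x 0 = 0 → e x = x := by
    intro x hx; funext i
    by_cases h : i = 0
    · subst h; simp [he, Function.update, hx]
    · simp [he, Function.update, h]
  -- the pieces
  set A : ℕ → Set (ℕ → unitInterval) := fun n => e ⁻¹' (U n)ᶜ with hA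
  set B : ℕ → Set (ℕ → unitInterval) :=
    fun n => {x | (1 : ℝ) / (n + 1) ≤ (x 0 : ℝ)} with hB
  have hcn1 : ∀ n : ℕ, (0:ℝ) < 1 / (n + 1) := fun n => by positivity
  have hcle1 : ∀ n : ℕ, (1:ℝ) / (n + 1) ≤ 1 := by
    intro n
    rw [div_le_one (by positivity)]
    linarith [Nat.cast_nonneg (α := ℝ) n]
  -- the base point
  set p : ℕ → unitInterval := fun _ => 1 with hp
  have hpB : ∀ n, p ∈ B n := fun n => by simpa [hB, hp] using hcle1 n
  refine ⟨fun n => A n ∪ B n, fun n => ⟨?_, ?_⟩, ?_⟩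
  · -- compactness
    have hclosed : IsClosed (A n ∪ B n) := by
      refine IsClosed.union ((hU n).isClosed_compl.preimage he_cont) ?_
      exact isClosed_le continuous_const (continuous_subtype_val.comp (continuous_apply 0))
    exact hclosed.isCompact
  · -- connectedness
    refine ⟨⟨p, Or.inr (hpB n)⟩, ?_⟩
    have hsegB : ∀ y : ℕ → unitInterval, y ∈ B n → range (segFun y) ⊆ B n := by
      intro y hy t ht
      obtain ⟨u, rfl⟩ := ht
      simp only [hB, mem_setOf_eq, segFun]
      have : (0:ℝ) ≤ u * (1 - y 0) := by nlinarith [u.2.1, (y 0).2.2]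
      calc (1:ℝ) / (n + 1) ≤ (y 0 : ℝ) := hy
        _ ≤ (y 0 : ℝ) + u * (1 - y 0) := by linarith
    refine preconnected_of_joined _ p ?_
    intro z hz
    rcases hz with hzA | hzB
    · -- z ∈ A n : go up along coordinate 0, then straight to p
      set w : ℕ → unitInterval := updFun z 1 with hw
      have hwB : w ∈ B n := by
        simpa [hB, hw, updFun, Function.update] using hcle1 n
      refine ⟨range (updFun z) ∪ range (segFun w), ?_, ?_, ?_, ?_⟩
      · rintro x (hx | hx)
        · obtain ⟨t, rfl⟩ := hx
          exact Or.inl (by simpa [hA, mem_preimage, he_upd] using hzA)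
        · exact Or.inr (hsegB w hwB hx)
      · refine IsPreconnected.union w ⟨1, rfl⟩ ⟨0, segFun_zero w⟩ ?_ ?_
        · exact (isConnected_range (updFun_cont z)).isPreconnected
        · exact (isConnected_range (segFun_cont w)).isPreconnected
      · refine Or.inl ⟨z 0, ?_⟩
        funext i
        by_cases h : i = 0
        · subst h; simp [updFun, Function.update]
        · simp [updFun, Function.update, h]
      · exact Or.inr ⟨1, by rw [segFun_one]⟩
    · -- z ∈ B n : go straight to p
      refine ⟨range (segFun z), fun x hx => Or.inr (hsegB z hzB hx),
        (isConnected_range (segFun_cont z)).isPreconnected,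
        ⟨0, segFun_zero z⟩, ⟨1, by rw [segFun_one]⟩⟩
  · -- the cover
    ext x
    simp only [mem_compl_iff, mem_iUnion, mem_union]
    constructor
    · intro hx
      by_cases hx0 : x 0 = 0
      · have : x ∉ ⋂ n, U n := fun hmem => hx (hZeq ▸ ⟨hx0, hmem⟩)
        obtain ⟨m, hm⟩ := by simpa [mem_iInter] using this
        exact ⟨m, Or.inl (by simpa [hA, mem_preimage, he_of_zero x hx0] using hm)⟩
      · have hx0' : (0:ℝ) < (x 0 : ℝ) := by
          rcases lt_or_eq_of_le (x 0).2.1 with h | h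
          · exact h
          · exact absurd (Subtype.ext h.symm) hx0
        obtain ⟨m, hm⟩ := exists_nat_one_div_lt hx0'
        exact ⟨m, Or.inr (le_of_lt hm)⟩
    · rintro ⟨m, hm | hm⟩ hxZ
      · have hx0 : x 0 = 0 := hZ0 hxZ
        have : x ∈ ⋂ n, U n := (hZeq ▸ hxZ).2
        exact hm (by simpa [he_of_zero x hx0] using mem_iInter.mp this m)
      · have hx0 : x 0 = 0 := hZ0 hxZ
        have : (x 0 : ℝ) = 0 := by rw [hx0]; rfl
        rw [hB] at hm
        simp only [mem_setOf_eq, this] at hm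
        linarith [hcn1 m]
end

section
/- (Boundary Bumping) Let X be a compact connected metric space, U a proper open subset of X, and K a connected component of the closure of U. Then K meets the topological boundary of U. -/
open Set

/-- Boundary bumping: let `X` be a compact connected metric space, `U` a proper open
subset of `X`, and `K` a connected component of `closure U`. Then `K` meets the
boundary `closure U \ U` of `U`. -/
theorem stmt_5 (X : Type*) [MetricSpace X] [CompactSpace X] [ConnectedSpace X]
    (U : Set X) (hU : IsOpen U) (hUproper : U ≠ Set.univ)
    (x : X) (hx : x ∈ closure U) :
    (connectedComponentIn (closure U) x ∩ (closure U \ U)).Nonempty := by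
  by_contra hemp
  rw [Set.not_nonempty_iff_eq_empty] at hemp
  -- the component is contained in U
  have hKU : connectedComponentIn (closure U) x ⊆ U := by
    intro y hy
    have hyc : y ∈ closure U := connectedComponentIn_subset _ _ hy
    by_contra hyU
    exact Set.eq_empty_iff_forall_notMem.mp hemp y ⟨hy, hyc, hyU⟩
  -- work in the subtype Y = closure U
  set Y := closure U with hY
  haveI : CompactSpace Y := isCompact_iff_compactSpace.mp (isClosed_closure.isCompact)
  set x' : Y := ⟨x, hx⟩ with hx'
  have himg : connectedComponentIn (closure U) x = (↑) '' connectedComponent x' :=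
    connectedComponentIn_eq_image hx
  -- the complement of val ⁻¹' U in Y is compact and disjoint from the iInter of clopens
  have hdisj : ((Subtype.val ⁻¹' U : Set Y)ᶜ) ∩
      ⋂ (Z : { Z : Set Y // IsClopen Z ∧ x' ∈ Z }), Z.1 = ∅ := by
    rw [← connectedComponent_eq_iInter_isClopen]
    ext y
    simp only [mem_inter_iff, mem_compl_iff, mem_preimage, mem_empty_iff_false, iff_false,
      not_and]
    intro hyU hyc
    exact hyU (hKU (himg ▸ ⟨y, hyc, rfl⟩))
  have hcpt : IsCompact ((Subtype.val ⁻¹' U : Set Y)ᶜ) :=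
    ((hU.preimage continuous_subtype_val).isClosed_compl).isCompact
  obtain ⟨t, ht⟩ := hcpt.elim_finite_subfamily_closed
    (fun Z : { Z : Set Y // IsClopen Z ∧ x' ∈ Z } => Z.1) (fun Z => Z.2.1.1) hdisj
  set C : Set Y := ⋂ Z ∈ t, (Z : { Z : Set Y // IsClopen Z ∧ x' ∈ Z }).1 with hC
  have hCclopen : IsClopen C := isClopen_biInter_finset fun Z _ => Z.2.1
  have hxC : x' ∈ C := mem_iInter₂.2 fun Z _ => Z.2.2
  have hCU : C ⊆ Subtype.val ⁻¹' U := by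
    intro y hy
    by_contra hyn
    exact Set.eq_empty_iff_forall_notMem.mp ht y ⟨hyn, hy⟩
  -- image of C in X
  have hclosed : IsClosed (Subtype.val '' C : Set X) :=
    (isClosed_closure.isClosedEmbedding_subtypeVal).isClosed_iff_image_isClosed.mp hCclopen.1
  obtain ⟨O, hO, hOC⟩ := isOpen_induced_iff.mp hCclopen.2
  have himgC : (Subtype.val '' C : Set X) = O ∩ U := by
    apply Subset.antisymm
    · rintro _ ⟨y, hy, rfl⟩
      exact ⟨by rw [← hOC] at hy; exact hy, hCU hy⟩
    · rintro z ⟨hzO, hzU⟩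
      exact ⟨⟨z, subset_closure hzU⟩, by rw [← hOC]; exact hzO, rfl⟩
  have hopen : IsOpen (Subtype.val '' C : Set X) := himgC ▸ hO.inter hU
  have := (isClopen_iff.mp ⟨hclosed, hopen⟩)
  rcases this with h | h
  · exact Set.eq_empty_iff_forall_notMem.mp h x ⟨x', hxC, rfl⟩
  · apply hUproper
    apply Subset.antisymm (subset_univ U)
    rw [← h, himgC]
    exact inter_subset_right
end

section
/- In the space A obtained from P × ℕ (P a continuum, p, q ∈ P) by identifying (q,n) with (p,n+1) for each n ∈ ℕ, the space A is connected and locally compact. -/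
section Aux

variable {P : Type*} [MetricSpace P] [CompactSpace P] [ConnectedSpace P]
    [Nonempty P] (p q : P)

private def myr (p q : P) : P × ℕ → P × ℕ → Prop :=
  fun a b => a.1 = q ∧ b.1 = p ∧ b.2 = a.2 + 1

private lemma eqvGen_iff (hpq : p ≠ q) (a b : P × ℕ) :
    Relation.EqvGen (myr p q) a b ↔ (a = b ∨ myr p q a b ∨ myr p q b a) := by
  constructor
  · intro h
    induction h with
    | rel x y h => exact Or.inr (Or.inl h)
    | refl x => exact Or.inl rfl
    | symm x y _ ih => tauto
    | trans x y z _ _ ih1 ih2 =>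
      rcases ih1 with rfl | h1 | h1
      · exact ih2
      · rcases ih2 with rfl | h2 | h2
        · exact Or.inr (Or.inl h1)
        · exact absurd (h1.2.1.symm.trans h2.1) hpq
        · obtain ⟨hx, hy1, hy2⟩ := h1
          obtain ⟨hz, hy1', hy2'⟩ := h2
          left
          exact Prod.ext (hx.trans hz.symm) (by omega)
      · rcases ih2 with rfl | h2 | h2
        · exact Or.inr (Or.inr h1)
        · obtain ⟨hy, hx1, hx2⟩ := h1
          obtain ⟨hy', hz1, hz2⟩ := h2
          left
          exact Prod.ext (hx1.trans hz1.symm) (by omega)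
        · exact absurd (h2.2.1.symm.trans h1.1) hpq
  · rintro (rfl | h | h)
    · exact Relation.EqvGen.refl a
    · exact Relation.EqvGen.rel _ _ h
    · exact (Relation.EqvGen.rel _ _ h).symm _ _

private lemma mk_eq_iff (hpq : p ≠ q) (a b : P × ℕ) :
    Quot.mk (myr p q) a = Quot.mk (myr p q) b ↔
      (a = b ∨ myr p q a b ∨ myr p q b a) := by
  rw [← eqvGen_iff p q hpq]
  exact ⟨Quot.eqvGen_exact, Quot.eqvGen_sound⟩

/-- The quotient map is a closed map. -/
private lemma closedMap (hpq : p ≠ q) : IsClosedMap (Quot.mk (myr p q)) := by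
  intro C hC
  set π := Quot.mk (myr p q) with hπ
  rw [← isQuotientMap_quot_mk.isClosed_preimage]
  have key : π ⁻¹' (π '' C) =
      (C ∪ ({p} ×ˢ ((· + 1) '' {n | (q, n) ∈ C}))) ∪ ({q} ×ˢ {n | (p, n + 1) ∈ C}) := by
    ext z
    simp only [Set.mem_preimage, Set.mem_image, Set.mem_union, Set.mem_prod,
      Set.mem_singleton_iff, Set.mem_setOf_eq]
    constructor
    · rintro ⟨w, hw, hww⟩
      rcases (mk_eq_iff p q hpq z w).mp hww.symm with rfl | h | h
      · exact Or.inl (Or.inl hw)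
      · obtain ⟨hz, hw1, hw2⟩ := h
        refine Or.inr ⟨hz, ?_⟩
        have : w = (p, z.2 + 1) := Prod.ext hw1 hw2
        rwa [← this]
      · obtain ⟨hw1, hz1, hz2⟩ := h
        refine Or.inl (Or.inr ⟨hz1, w.2, ?_, hz2.symm⟩)
        have : w = (q, w.2) := Prod.ext hw1 rfl
        rwa [← this]
    · rintro ((hz | ⟨hz1, n, hn, hz2⟩) | ⟨hz1, hz2⟩)
      · exact ⟨z, hz, rfl⟩
      · exact ⟨(q, n), hn, Quot.sound ⟨rfl, hz1, hz2.symm⟩⟩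
      · exact ⟨(p, z.2 + 1), hz2, (Quot.sound ⟨hz1, rfl, rfl⟩).symm⟩
  rw [key]
  exact ((hC.union (isClosed_singleton.prod (isClosed_discrete _)))).union
    (isClosed_singleton.prod (isClosed_discrete _))

end Aux

/-- Let `P` be a continuum and `p ≠ q` points of `P`. The space `A` obtained from
`P × ℕ` by identifying `(q, n)` with `(p, n + 1)` for each `n` is connected and
locally compact. -/
theorem stmt_8 (P : Type*) [MetricSpace P] [CompactSpace P] [ConnectedSpace P]
    [Nonempty P] (p q : P) (hpq : p ≠ q) :
    ConnectedSpace (Quot (fun a b : P × ℕ => a.1 = q ∧ b.1 = p ∧ b.2 = a.2 + 1)) ∧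
    LocallyCompactSpace (Quot (fun a b : P × ℕ => a.1 = q ∧ b.1 = p ∧ b.2 = a.2 + 1)) := by
  have hr : (fun a b : P × ℕ => a.1 = q ∧ b.1 = p ∧ b.2 = a.2 + 1) = myr p q := rfl
  rw [hr]
  set π := Quot.mk (myr p q) with hπ
  have hπc : Continuous π := continuous_quot_mk
  constructor
  · -- connectedness
    have hT : ∀ n : ℕ, IsPreconnected (π '' (Set.univ ×ˢ Set.Iic n)) := by
      intro n
      induction n with
      | zero =>
        have : (Set.univ ×ˢ Set.Iic 0 : Set (P × ℕ)) = (fun a : P => (a, 0)) '' Set.univ := by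
          ext z
          simp only [Set.mem_prod, Set.mem_univ, Set.mem_Iic, Nat.le_zero, true_and,
            Set.mem_image]
          constructor
          · intro h; exact ⟨z.1, Prod.ext rfl h.symm⟩
          · rintro ⟨a, rfl⟩; rfl
        rw [this, ← Set.image_comp]
        exact (isPreconnected_univ.image _
          (hπc.comp (Continuous.prodMk_left 0)).continuousOn)
      | succ n ih =>
        have hsplit : (Set.univ ×ˢ Set.Iic (n + 1) : Set (P × ℕ)) =
            (Set.univ ×ˢ Set.Iic n) ∪ ((fun a : P => (a, n + 1)) '' Set.univ) := by
          ext z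
          simp only [Set.mem_prod, Set.mem_univ, Set.mem_Iic, true_and, Set.mem_union,
            Set.mem_image]
          constructor
          · intro h
            rcases Nat.lt_or_ge z.2 (n + 1) with h' | h'
            · exact Or.inl (by omega)
            · exact Or.inr ⟨z.1, Prod.ext rfl (by omega)⟩
          · rintro (h | ⟨a, rfl⟩)
            · omega
            · rfl
        rw [hsplit, Set.image_union]
        refine IsPreconnected.union (π (q, n)) ?_ ?_ ih ?_
        · exact ⟨(q, n), ⟨trivial, Set.self_mem_Iic⟩, rfl⟩
        · refine ⟨(p, n + 1), ⟨p, trivial, rfl⟩, ?_⟩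
          exact (Quot.sound ⟨rfl, rfl, rfl⟩).symm
        · rw [← Set.image_comp]
          exact (isPreconnected_univ.image _
            (hπc.comp (Continuous.prodMk_left (n + 1))).continuousOn)
    have huniv : (Set.univ : Set (Quot (myr p q))) =
        ⋃ n : ℕ, π '' (Set.univ ×ˢ Set.Iic n) := by
      refine Set.eq_of_subset_of_subset ?_ (Set.subset_univ _)
      intro x _
      obtain ⟨z, rfl⟩ := Quot.exists_rep x
      exact Set.mem_iUnion.mpr ⟨z.2, z, ⟨trivial, Set.self_mem_Iic⟩, rfl⟩
    haveI : Nonempty (Quot (myr p q)) := ⟨π (p, 0)⟩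
    refine { toNonempty := this, isPreconnected_univ := ?_ }
    rw [huniv]
    exact isPreconnected_iUnion ⟨π (p, 0), Set.mem_iInter.mpr fun n =>
      ⟨(p, 0), ⟨trivial, Nat.zero_le n⟩, rfl⟩⟩ hT
  · -- local compactness
    refine ⟨fun x N hN => ?_⟩
    obtain ⟨z, rfl⟩ := Quot.exists_rep x
    set F : Set (P × ℕ) := π ⁻¹' {π z} with hF
    have hFfin : F.Finite := by
      apply Set.Finite.subset ((((Set.finite_singleton ((q, z.2 - 1) : P × ℕ)).insert (p, z.2 + 1)).insert z))
      intro w hw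
      simp only [hF, Set.mem_preimage, Set.mem_singleton_iff] at hw
      rcases (mk_eq_iff p q hpq w z).mp hw with rfl | h | h
      · exact Set.mem_insert _ _
      · obtain ⟨hw1, hz1, hz2⟩ := h
        refine Set.mem_insert_iff.mpr (Or.inr (Set.mem_insert_iff.mpr (Or.inr ?_)))
        simp only [Set.mem_singleton_iff]
        exact Prod.ext hw1 (by omega)
      · obtain ⟨hz1, hw1, hw2⟩ := h
        refine Set.mem_insert_iff.mpr (Or.inr (Set.mem_insert_iff.mpr (Or.inl ?_)))
        exact Prod.ext hw1 hw2
    have hchoice : ∀ w ∈ F, ∃ K : Set (P × ℕ), K ∈ nhds w ∧ K ⊆ π ⁻¹' N ∧ IsCompact K := by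
      intro w hw
      have hNw : π ⁻¹' N ∈ nhds w := by
        apply hπc.continuousAt.preimage_mem_nhds
        simp only [hF, Set.mem_preimage, Set.mem_singleton_iff] at hw
        rwa [hw]
      exact LocallyCompactSpace.local_compact_nhds w _ hNw
    choose K hK1 hK2 hK3 using hchoice
    haveI := hFfin.to_subtype
    set Kt : Set (P × ℕ) := ⋃ w : F, K w w.2 with hKt
    have hKtC : IsCompact Kt := isCompact_iUnion fun w => hK3 w w.2
    set V : Set (P × ℕ) := ⋃ w : F, interior (K w w.2) with hV
    have hVopen : IsOpen V := isOpen_iUnion fun w => isOpen_interior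
    have hFV : F ⊆ V := fun w hw =>
      Set.mem_iUnion.mpr ⟨⟨w, hw⟩, mem_interior_iff_mem_nhds.mpr (hK1 w hw)⟩
    have hVKt : V ⊆ Kt := Set.iUnion_mono fun w => interior_subset
    set U : Set (Quot (myr p q)) := (π '' Vᶜ)ᶜ with hU
    have hUopen : IsOpen U := (closedMap p q hpq _ hVopen.isClosed_compl).isOpen_compl
    have hxU : π z ∈ U := by
      intro h
      obtain ⟨w, hw, hwz⟩ := h
      exact hw (hFV (by simpa [hF] using hwz))
    have hUsub : U ⊆ π '' Kt := by
      intro y hy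
      obtain ⟨w, rfl⟩ := Quot.exists_rep y
      by_cases hwV : w ∈ V
      · exact ⟨w, hVKt hwV, rfl⟩
      · exact absurd ⟨w, hwV, rfl⟩ hy
    refine ⟨π '' Kt, Filter.mem_of_superset (hUopen.mem_nhds hxU) hUsub, ?_, hKtC.image hπc⟩
    rintro y ⟨w, hw, rfl⟩
    obtain ⟨w', hw'⟩ := Set.mem_iUnion.mp hw
    exact hK2 w' w'.2 hw'
end

section
/- Let X be a metric continuum, and let P* ⊆ X be a closed subset homeomorphic to a continuum P, with boundary Bd_X(P*) ⊆ {a, b} for two points a, b ∈ P*. Let t ∈ P* be a point whose composant in P* contains neither a nor b. Then every subcontinuum E of X containing t either is contained in the composant of t in P* (hence contained in P* \ {a,b}) or contains all of P*. -/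
/-- The composant of a point `t` in a subset `Pstar` of a space `X`: the union of all
proper subcontinua of `Pstar` containing `t`. -/
def composantIn {X : Type*} [TopologicalSpace X] (Pstar : Set X) (t : X) : Set X :=
  ⋃₀ {K : Set X | K ⊆ Pstar ∧ IsCompact K ∧ IsConnected K ∧ K ≠ Pstar ∧ t ∈ K}

open Set

/-- Boundary bumping: in a compact Hausdorff connected space, the connected component
of a point in a proper closed set meets the frontier of that set. -/
theorem bump_lemma {Y : Type*} [TopologicalSpace Y] [CompactSpace Y] [T2Space Y]
    [ConnectedSpace Y] {F : Set Y} (hF : IsClosed F) (hFne : F ≠ univ) {y : Y} (hy : y ∈ F) :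
    ∃ z, z ∈ connectedComponentIn F y ∧ z ∈ frontier F := by
  by_contra h
  push_neg at h
  haveI : CompactSpace F := isCompact_iff_compactSpace.mp hF.isCompact
  set p : F := ⟨y, hy⟩
  have hcomp : connectedComponentIn F y = (↑) '' connectedComponent p :=
    connectedComponentIn_eq_image hy
  -- B' : the frontier pulled back to F
  set B' : Set F := Subtype.val ⁻¹' frontier F with hB'
  have hB'c : IsCompact B' := (isClosed_frontier.preimage continuous_subtype_val).isCompact
  have hdisj : B' ∩ ⋂ s : { s : Set F // IsClopen s ∧ p ∈ s }, (s : Set F) = ∅ := by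
    rw [← connectedComponent_eq_iInter_isClopen p]
    ext q
    simp only [mem_inter_iff, mem_empty_iff_false, iff_false, not_and]
    intro hqB hqC
    exact h q (hcomp ▸ mem_image_of_mem _ hqC) hqB
  obtain ⟨u, hu⟩ := hB'c.elim_finite_subfamily_closed _ (fun s => s.2.1.1) hdisj
  set Z : Set F := ⋂ i ∈ u, (i : Set F) with hZ
  have hZclopen : IsClopen Z := by
    apply Set.Finite.isClopen_biInter u.finite_toSet
    exact fun i _ => i.2.1
  have hpZ : p ∈ Z := mem_iInter₂.mpr fun i _ => i.2.2
  have hZB : Z ∩ B' = ∅ := by rw [inter_comm]; exact hu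
  -- push down to Y
  set K : Set Y := Subtype.val '' Z with hK
  have hKF : K ⊆ F := by rintro x ⟨q, _, rfl⟩; exact q.2
  have hKfr : Disjoint K (frontier F) := by
    rw [disjoint_iff_inter_eq_empty]
    ext x
    simp only [mem_inter_iff, mem_empty_iff_false, iff_false, not_and]
    rintro ⟨q, hqZ, rfl⟩ hqfr
    have : q ∈ Z ∩ B' := ⟨hqZ, hqfr⟩
    rw [hZB] at this; exact this
  have hKint : K ⊆ interior F := fun x hx => by
    have hxF : x ∈ F := hKF hx
    by_contra hxint
    exact hKfr.ne_of_mem hx ⟨subset_closure hxF, hxint⟩ rfl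
  have hKclosed : IsClosed K := by
    have : IsCompact K := (hZclopen.1.isCompact).image continuous_subtype_val
    exact this.isClosed
  have hKopen : IsOpen K := by
    obtain ⟨U, hU, hUZ⟩ := isOpen_induced_iff.mp hZclopen.2
    have hKU : K = U ∩ F := by
      rw [hK, ← hUZ, Subtype.image_preimage_coe, inter_comm]
    have : K = U ∩ interior F := by
      apply Subset.antisymm
      · exact fun x hx => ⟨(hKU ▸ hx).1, hKint hx⟩
      · rintro x ⟨hxU, hxint⟩
        rw [hKU]; exact ⟨hxU, interior_subset hxint⟩
    rw [this]
    exact hU.inter isOpen_interior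
  have : K = ∅ ∨ K = univ := isClopen_iff.mp ⟨hKclosed, hKopen⟩
  rcases this with hKe | hKu
  · have hpK : (p : Y) ∈ K := mem_image_of_mem _ hpZ
    rw [hKe] at hpK
    exact hpK
  · exact hFne (univ_subset_iff.mp (hKu ▸ hKF : univ ⊆ F))

/-- Let `X` be a continuum and `P* ⊆ X` a closed connected (hence subcontinuum) subset
with boundary contained in `{a, b}` for points `a, b ∈ P*`. Let `t ∈ P*` be a point
whose composant in `P*` contains neither `a` nor `b`. Then every subcontinuum `E` of
`X` containing `t` is either contained in the composant of `t` in `P*` or contains all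
of `P*`. -/
theorem stmt_17 (X : Type*) [MetricSpace X] [CompactSpace X] [ConnectedSpace X]
    (Pstar : Set X) (hPcl : IsClosed Pstar) (hPconn : IsConnected Pstar)
    (a b : X) (ha : a ∈ Pstar) (hb : b ∈ Pstar)
    (hfr : frontier Pstar ⊆ {a, b})
    (t : X) (htP : t ∈ Pstar)
    (hta : a ∉ composantIn Pstar t) (htb : b ∉ composantIn Pstar t)
    (E : Set X) (hEc : IsCompact E) (hEconn : IsConnected E) (htE : t ∈ E) :
    E ⊆ composantIn Pstar t ∨ Pstar ⊆ E := by
  by_cases hEP : E ⊆ Pstar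
  · rcases eq_or_ne E Pstar with rfl | hne
    · exact Or.inr subset_rfl
    · exact Or.inl fun x hx => ⟨E, ⟨hEP, hEc, hEconn, hne, htE⟩, hx⟩
  · right
    obtain ⟨e, heE, heP⟩ := not_subset.mp hEP
    haveI : CompactSpace E := isCompact_iff_compactSpace.mp hEc
    haveI : ConnectedSpace E := Subtype.connectedSpace hEconn
    set F : Set E := Subtype.val ⁻¹' Pstar with hF
    have hFcl : IsClosed F := hPcl.preimage continuous_subtype_val
    have hFne : F ≠ univ := by
      intro h
      have : (⟨e, heE⟩ : E) ∈ F := h ▸ mem_univ _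
      exact heP this
    have hyF : (⟨t, htE⟩ : E) ∈ F := htP
    obtain ⟨z, hzC, hzfr⟩ := bump_lemma hFcl hFne hyF
    have hzP : (z : X) ∈ frontier Pstar :=
      continuous_subtype_val.frontier_preimage_subset Pstar hzfr
    set C : Set X := Subtype.val '' connectedComponentIn F (⟨t, htE⟩ : E) with hC
    have htC : t ∈ C := mem_image_of_mem _ (mem_connectedComponentIn hyF)
    have hCP : C ⊆ Pstar := by
      rintro x ⟨q, hq, rfl⟩
      exact connectedComponentIn_subset F _ hq
    have hCE : C ⊆ E := by rintro x ⟨q, _, rfl⟩; exact q.2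
    have hCcomp : IsCompact C := by
      have h1 : IsCompact (connectedComponentIn F (⟨t, htE⟩ : E)) := by
        rw [connectedComponentIn_eq_image hyF]
        haveI : CompactSpace F := isCompact_iff_compactSpace.mp hFcl.isCompact
        exact isClosed_connectedComponent.isCompact.image continuous_subtype_val
      exact h1.image continuous_subtype_val
    have hCconn : IsConnected C :=
      (isConnected_connectedComponentIn_iff.mpr hyF).image _
        continuous_subtype_val.continuousOn
    by_cases hCeq : C = Pstar
    · exact hCeq ▸ hCE
    · exfalso
      have hzCX : (z : X) ∈ C := mem_image_of_mem _ hzC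
      have hmem : (z : X) ∈ composantIn Pstar t :=
        ⟨C, ⟨hCP, hCcomp, hCconn, hCeq, htC⟩, hzCX⟩
      rcases hfr hzP with h | h
      · exact hta (h ▸ hmem)
      · exact htb (h ▸ hmem)
end
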